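/- arXiv:2306.01995 — 2 statements merged into one kernel-verified Lean document; each statement's English description precedes it below -/
import Mathlib

section
/- Let x_1, x_2, ... be an i.i.d. Bernoulli(p) sequence with p ∈ (0,1), let S_k = x_1 + ... + x_k, and fix ϱ > 0. Then P[ S_k / k ≥ p - ϱ for all k ≥ 1 ] > 0. -/
open MeasureTheory ProbabilityTheory

theorem positive_prob_never_drop
    {Ω : Type*} [MeasurableSpace Ω] (μ : Measure Ω) [IsProbabilityMeasure μ]
    (x : ℕ → Ω → ℝ) (hmeas : ∀ i, Measurable (x i))
    (hval : ∀ i ω, x i ω = 0 ∨ x i ω = 1)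
    (hindep : iIndepFun x μ)
    (p : ℝ) (hp : p ∈ Set.Ioo (0:ℝ) 1)
    (hmean : ∀ i, μ {ω | x i ω = 1} = ENNReal.ofReal p)
    (ϱ : ℝ) (hϱ : 0 < ϱ) :
    0 < μ {ω | ∀ k : ℕ, 1 ≤ k →
      p - ϱ ≤ (∑ i ∈ Finset.range k, x i ω) / k} := by
  classical
  obtain ⟨hp0, hp1⟩ := hp
  set r : ℝ := p - ϱ with hr
  have hr1 : r < 1 := by linarith
  have hrp : r < p := by linarith
  -- basic set facts
  have hA : ∀ i, MeasurableSet {ω | x i ω = 1} := fun i =>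
    (hmeas i) (measurableSet_singleton 1)
  have hAc : ∀ i, {ω | x i ω = 0} = {ω | x i ω = 1}ᶜ := by
    intro i
    ext ω
    rcases hval i ω with h | h <;> simp [h]
  -- the law of each x i
  have key : ∀ i (s : Set ℝ), μ {ω | x i ω ∈ s} =
      (if (0:ℝ) ∈ s then 1 - ENNReal.ofReal p else 0) +
      (if (1:ℝ) ∈ s then ENNReal.ofReal p else 0) := by
    intro i s
    have hq1 : ENNReal.ofReal p ≤ 1 := ENNReal.ofReal_le_one.2 hp1.le
    by_cases h0 : (0:ℝ) ∈ s <;> by_cases h1 : (1:ℝ) ∈ s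
    · have : {ω | x i ω ∈ s} = Set.univ := by
        ext ω; rcases hval i ω with h | h <;> simp [h, h0, h1]
      rw [this, if_pos h0, if_pos h1, measure_univ, tsub_add_cancel_of_le hq1]
    · have : {ω | x i ω ∈ s} = {ω | x i ω = 1}ᶜ := by
        rw [← hAc]; ext ω; rcases hval i ω with h | h <;> simp [h, h0, h1]
      rw [this, if_pos h0, if_neg h1, add_zero, prob_compl_eq_one_sub (hA i), hmean i]
    · have : {ω | x i ω ∈ s} = {ω | x i ω = 1} := by
        ext ω; rcases hval i ω with h | h <;> simp [h, h0, h1]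
      rw [this, if_neg h0, if_pos h1, zero_add, hmean i]
    · have : {ω | x i ω ∈ s} = ∅ := by
        ext ω; rcases hval i ω with h | h <;> simp [h, h0, h1]
      rw [this, if_neg h0, if_neg h1, add_zero, measure_empty]
  have hident : ∀ i, IdentDistrib (x i) (x 0) μ μ := by
    intro i
    refine ⟨(hmeas i).aemeasurable, (hmeas 0).aemeasurable, ?_⟩
    ext s hs
    rw [Measure.map_apply (hmeas i) hs, Measure.map_apply (hmeas 0) hs]
    show μ {ω | x i ω ∈ s} = μ {ω | x 0 ω ∈ s}
    rw [key i s, key 0 s]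
  have hint : Integrable (x 0) μ := by
    refine Integrable.mono' (integrable_const (1:ℝ)) (hmeas 0).aestronglyMeasurable ?_
    filter_upwards with ω
    rcases hval 0 ω with h | h <;> simp [h]
  have hexp : μ[x 0] = p := by
    have hx0 : x 0 = Set.indicator {ω | x 0 ω = 1} (fun _ => (1:ℝ)) := by
      funext ω
      rcases hval 0 ω with h | h <;> simp [Set.indicator_apply, h]
    rw [hx0, integral_indicator_const _ (hA 0), measureReal_def, hmean 0, smul_eq_mul, mul_one,
      ENNReal.toReal_ofReal hp0.le]
  -- strong law of large numbers
  have hslln : ∀ᵐ ω ∂μ,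
      Filter.Tendsto (fun n : ℕ => (∑ i ∈ Finset.range n, x i ω) / n)
        Filter.atTop (nhds p) := by
    have := strong_law_ae_real x hint (fun i j hij => hindep.indepFun hij) hident
    rwa [hexp] at this
  -- the good tail events
  set G : ℕ → Set Ω := fun N => {ω | ∀ m : ℕ, 1 ≤ m →
    r * (N + m) - N ≤ ∑ i ∈ Finset.range m, x (N + i) ω} with hG
  -- a.e. ω lies in some G N
  have hsub : ∀ᵐ ω ∂μ, ω ∈ ⋃ N, G N := by
    filter_upwards [hslln] with ω hω
    have hev : ∀ᶠ n : ℕ in Filter.atTop,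
        r < (∑ i ∈ Finset.range n, x i ω) / n :=
      hω.eventually (eventually_gt_nhds hrp)
    obtain ⟨N₀, hN₀⟩ := Filter.eventually_atTop.1 hev
    refine Set.mem_iUnion.2 ⟨max N₀ 1, ?_⟩
    set N := max N₀ 1 with hNdef
    intro m hm
    have hjN₀ : N₀ ≤ N + m := le_trans (le_max_left _ _) (Nat.le_add_right _ _)
    have hjpos : 0 < N + m := Nat.lt_of_lt_of_le Nat.zero_lt_one
      (le_trans (le_max_right _ _) (Nat.le_add_right _ _))
    have h1 := hN₀ (N + m) hjN₀
    have hjpos' : (0:ℝ) < ((N + m : ℕ) : ℝ) := by exact_mod_cast hjpos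
    have h2 : r * ((N:ℝ) + m) ≤ ∑ i ∈ Finset.range (N + m), x i ω := by
      have h3 := (lt_div_iff₀ hjpos').1 h1
      push_cast at h3 ⊢
      linarith
    have hsplit : ∑ i ∈ Finset.range (N + m), x i ω =
        (∑ i ∈ Finset.range N, x i ω) + ∑ i ∈ Finset.range m, x (N + i) ω := by
      rw [← Finset.sum_range_add_sum_Ico _ (Nat.le_add_right N m),
        Finset.sum_Ico_eq_sum_range]
      simp
    have hSN : (∑ i ∈ Finset.range N, x i ω) ≤ N := by
      calc (∑ i ∈ Finset.range N, x i ω) ≤ ∑ _i ∈ Finset.range N, (1:ℝ) := by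
            refine Finset.sum_le_sum fun i _ => ?_
            rcases hval i ω with h | h <;> simp [h]
        _ = N := by simp
    have := h2
    rw [hsplit] at this
    linarith
  -- hence some G N has positive measure
  have hUnion : 1 ≤ μ (⋃ N, G N) := by
    have h0 : μ {ω | ¬ ω ∈ ⋃ N, G N} = 0 := hsub
    have : (1:ENNReal) = μ Set.univ := (measure_univ).symm
    rw [this]
    calc μ Set.univ ≤ μ ((⋃ N, G N) ∪ {ω | ¬ ω ∈ ⋃ N, G N}) := by
          refine measure_mono fun ω _ => ?_
          by_cases h : ω ∈ ⋃ N, G N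
          · exact Or.inl h
          · exact Or.inr h
      _ ≤ μ (⋃ N, G N) + μ {ω | ¬ ω ∈ ⋃ N, G N} := measure_union_le _ _
      _ = μ (⋃ N, G N) := by rw [h0, add_zero]
  have hexN : ∃ N, 0 < μ (G N) := by
    by_contra h
    push_neg at h
    have hz : ∀ N, μ (G N) = 0 := fun N => le_antisymm (h N) zero_le
    have : μ (⋃ N, G N) = 0 := by
      refine le_antisymm ?_ zero_le
      calc μ (⋃ N, G N) ≤ ∑' N, μ (G N) := measure_iUnion_le _
        _ = 0 := by simp [hz]
    rw [this] at hUnion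
    exact absurd hUnion (by simp)
  obtain ⟨N, hGN⟩ := hexN
  -- the head event
  set B : Set Ω := ⋂ i ∈ Finset.range N, {ω | x i ω = 1} with hB
  have hBmeas_comap : ∀ i : ℕ,
      MeasurableSet[MeasurableSpace.comap (x i) inferInstance] {ω | x i ω = 1} := by
    intro i
    exact ⟨{1}, measurableSet_singleton 1, rfl⟩
  have hBmeasure : μ B = (ENNReal.ofReal p) ^ N := by
    rw [hB, hindep.meas_biInter (fun i _ => hBmeas_comap i)]
    simp [hmean, Finset.prod_const]
  have hBpos : 0 < μ B := by
    rw [hBmeasure]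
    exact ENNReal.pow_pos (by simpa using hp0) N
  -- independence of B and G N
  have hle : ∀ n : ℕ, MeasurableSpace.comap (x n) inferInstance ≤ ‹MeasurableSpace Ω› :=
    fun n => (hmeas n).comap_le
  have hIndep : Indep (⨆ n ∈ {i : ℕ | i < N}, MeasurableSpace.comap (x n) inferInstance)
      (⨆ n ∈ {i : ℕ | i < N}ᶜ, MeasurableSpace.comap (x n) inferInstance) μ :=
    indep_biSup_compl hle hindep.iIndep {i : ℕ | i < N}
  have hBm : MeasurableSet[⨆ n ∈ {i : ℕ | i < N},
      MeasurableSpace.comap (x n) inferInstance] B := by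
    refine MeasurableSet.biInter (Finset.range N).countable_toSet fun i hi => ?_
    have hiN : i ∈ {j : ℕ | j < N} := Finset.mem_range.1 hi
    exact (le_biSup (fun n => MeasurableSpace.comap (x n) inferInstance) hiN)
      _ (hBmeas_comap i)
  have hGm : MeasurableSet[⨆ n ∈ {i : ℕ | i < N}ᶜ,
      MeasurableSpace.comap (x n) inferInstance] (G N) := by
    have hxm : ∀ j : ℕ, N ≤ j → Measurable[⨆ n ∈ {i : ℕ | i < N}ᶜ,
        MeasurableSpace.comap (x n) inferInstance] (x j) := by
      intro j hj
      have hjc : j ∈ {i : ℕ | i < N}ᶜ := by simp [Set.mem_setOf_eq]; omega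
      have hle2 : MeasurableSpace.comap (x j) inferInstance ≤
          ⨆ n ∈ {i : ℕ | i < N}ᶜ, MeasurableSpace.comap (x n) inferInstance :=
        le_biSup (fun n => MeasurableSpace.comap (x n) inferInstance) hjc
      exact Measurable.of_comap_le hle2
    have : G N = ⋂ m : ℕ, ⋂ (_ : 1 ≤ m),
        {ω | r * (N + m) - N ≤ ∑ i ∈ Finset.range m, x (N + i) ω} := by
      ext ω; simp [hG, Set.mem_iInter]
    rw [this]
    refine MeasurableSet.iInter fun m => MeasurableSet.iInter fun _ => ?_
    have hsum : Measurable[⨆ n ∈ {i : ℕ | i < N}ᶜ, MeasurableSpace.comap (x n) inferInstance]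
        (fun ω => ∑ i ∈ Finset.range m, x (N + i) ω) := by
      refine Finset.measurable_sum _ fun i _ => hxm (N + i) (Nat.le_add_right _ _)
    exact measurableSet_le measurable_const hsum
  have hmul : μ (B ∩ G N) = μ B * μ (G N) :=
    (Indep_iff _ _ _).1 hIndep B (G N) hBm hGm
  have hBGpos : 0 < μ (B ∩ G N) := by
    rw [hmul]
    exact ENNReal.mul_pos hBpos.ne' hGN.ne'
  -- B ∩ G N is contained in the target event
  refine lt_of_lt_of_le hBGpos (measure_mono ?_)
  rintro ω ⟨hωB, hωG⟩
  have hB1 : ∀ i, i < N → x i ω = 1 := by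
    intro i hi
    have := Set.mem_iInter₂.1 hωB i (Finset.mem_range.2 hi)
    exact this
  intro k hk
  have hkpos : (0:ℝ) < k := by exact_mod_cast hk
  rw [le_div_iff₀ hkpos]
  show r * k ≤ ∑ i ∈ Finset.range k, x i ω
  by_cases hkN : k ≤ N
  · have hsum : (∑ i ∈ Finset.range k, x i ω) = k := by
      rw [Finset.sum_congr rfl fun i hi => hB1 i (lt_of_lt_of_le (Finset.mem_range.1 hi) hkN)]
      simp
    rw [hsum]
    nlinarith
  · push_neg at hkN
    set m := k - N with hm
    have hmk : k = N + m := by omega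
    have hm1 : 1 ≤ m := by omega
    have hT := hωG m hm1
    have hsplit : ∑ i ∈ Finset.range k, x i ω =
        (∑ i ∈ Finset.range N, x i ω) + ∑ i ∈ Finset.range m, x (N + i) ω := by
      rw [hmk, ← Finset.sum_range_add_sum_Ico _ (Nat.le_add_right N m),
        Finset.sum_Ico_eq_sum_range]
      simp
    have hSN : (∑ i ∈ Finset.range N, x i ω) = N := by
      rw [Finset.sum_congr rfl fun i hi => hB1 i (Finset.mem_range.1 hi)]
      simp
    rw [hsplit, hSN]
    have : (k:ℝ) = (N:ℝ) + m := by rw [hmk]; push_cast; ring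
    rw [this]
    linarith
end

section
/- Let X ~ HyperGeom(A, B, C) (the number of marked items among B uniformly random draws without replacement from a population of A items of which C are marked) and Y ~ Bin(B, C/A). Then for every convex function f : ℝ → ℝ, E[f(X)] ≤ E[f(Y)]. -/
open Finset

section Hoeffding

/-- cardinality of the image of a tuple -/
private def imc {B : ℕ} {α : Type*} [DecidableEq α] [Fintype α] (h : Fin B → α) : ℕ :=
  (Finset.univ.image h).card

private lemma imc_le {B : ℕ} {α : Type*} [DecidableEq α] [Fintype α] (h : Fin B → α) :
    imc h ≤ B := by
  calc (Finset.univ.image h).card ≤ (Finset.univ : Finset (Fin B)).card := card_image_le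
  _ = B := by simp

private lemma imc_comp_inj {B : ℕ} {α β : Type*} [DecidableEq α] [Fintype α]
    [DecidableEq β] [Fintype β] (e : α → β) (he : Function.Injective e) (h : Fin B → α) :
    imc (e ∘ h) = imc h := by
  unfold imc
  rw [← Finset.image_image, Finset.card_image_of_injective _ he]

/-- invariance of the weighted sum under a bijection of the codomain -/
private lemma sum_imc_equiv {B : ℕ} {α β : Type*} [DecidableEq α] [Fintype α]
    [DecidableEq β] [Fintype β] (e : α ≃ β) (φ : ℕ → ℝ) :
    ∑ h : Fin B → α, φ (imc h) = ∑ h : Fin B → β, φ (imc h) := by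
  apply Fintype.sum_bijective (fun h => (e : α → β) ∘ h)
    (Equiv.arrowCongr (Equiv.refl (Fin B)) e).bijective
  intro h
  rw [imc_comp_inj _ e.injective]

private lemma swap_const {B : ℕ} {α : Type*} [DecidableEq α] [Fintype α]
    (φ : ℕ → ℝ) (i : Fin B) (a b : α) :
    ∑ h ∈ univ.filter (fun h : Fin B → α => h i = a), φ (imc h)
      = ∑ h ∈ univ.filter (fun h : Fin B → α => h i = b), φ (imc h) := by
  apply Finset.sum_bij' (fun h _ => (Equiv.swap a b : α → α) ∘ h)
    (fun h _ => (Equiv.swap a b : α → α) ∘ h)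
  · intro h hh
    simp only [mem_filter, mem_univ, true_and] at hh ⊢
    simp [Function.comp, hh, Equiv.swap_apply_left]
  · intro h hh
    simp only [mem_filter, mem_univ, true_and] at hh ⊢
    simp [Function.comp, hh, Equiv.swap_apply_right]
  · intro h _; funext j; simp [Function.comp]
  · intro h _; funext j; simp [Function.comp]
  · intro h _; rw [imc_comp_inj _ (Equiv.swap a b).injective]

private lemma mean_lemma {B : ℕ} {α : Type*} [Fintype α] [DecidableEq α]
    (hcard : Fintype.card α = B) (M : Finset α) (φ : ℕ → ℝ) :
    ∑ h : Fin B → α, φ (imc h) * ((univ.filter fun j => h j ∈ M).card : ℝ)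
      = M.card * ∑ h : Fin B → α, φ (imc h) := by
  classical
  rcases Nat.eq_zero_or_pos B with hB0 | hBpos
  · subst hB0
    have hM : M = ∅ := by
      have : (univ : Finset α) = ∅ := univ_eq_empty_iff.2 (by
        rw [← Fintype.card_eq_zero_iff] at *; omega)
      exact subset_empty.1 (this ▸ subset_univ M)
    subst hM
    simp
  · have hne : Nonempty α := Fintype.card_pos_iff.1 (hcard ▸ hBpos)
    obtain ⟨a0⟩ := hne
    set S : ℝ := ∑ h : Fin B → α, φ (imc h) with hS
    have hfib : ∀ i : Fin B, ∀ a : α,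
        ∑ h ∈ univ.filter (fun h : Fin B → α => h i = a), φ (imc h)
          = ∑ h ∈ univ.filter (fun h : Fin B → α => h i = a0), φ (imc h) :=
      fun i a => swap_const φ i a a0
    have htot : ∀ i : Fin B,
        (B : ℝ) * (∑ h ∈ univ.filter (fun h : Fin B → α => h i = a0), φ (imc h)) = S := by
      intro i
      have := Finset.sum_fiberwise_of_maps_to (g := fun h : Fin B → α => h i)
        (s := (univ : Finset (Fin B → α))) (t := (univ : Finset α))
        (fun _ _ => mem_univ _) (fun h => φ (imc h))
      rw [hS, ← this]
      rw [Finset.sum_congr rfl (fun a _ => hfib i a), Finset.sum_const, card_univ, hcard,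
        nsmul_eq_mul]
    have hcnt : ∀ h : Fin B → α, ((univ.filter fun j => h j ∈ M).card : ℝ)
        = ∑ j : Fin B, if h j ∈ M then (1:ℝ) else 0 := by
      intro h; rw [Finset.card_filter]; push_cast; rfl
    calc ∑ h : Fin B → α, φ (imc h) * ((univ.filter fun j => h j ∈ M).card : ℝ)
        = ∑ h : Fin B → α, ∑ j : Fin B, (if h j ∈ M then φ (imc h) else 0) := by
          refine Finset.sum_congr rfl fun h _ => ?_
          rw [hcnt, Finset.mul_sum]
          exact Finset.sum_congr rfl fun j _ => by split <;> simp
      _ = ∑ j : Fin B, ∑ h : Fin B → α, (if h j ∈ M then φ (imc h) else 0) :=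
          Finset.sum_comm
      _ = ∑ j : Fin B, ∑ a ∈ M, ∑ h ∈ univ.filter (fun h : Fin B → α => h j = a), φ (imc h) := by
          refine Finset.sum_congr rfl fun j _ => ?_
          rw [← Finset.sum_filter]
          rw [← Finset.sum_fiberwise_of_maps_to (g := fun h : Fin B → α => h j)
            (t := M) (fun h hh => (mem_filter.1 hh).2) (fun h => φ (imc h))]
          refine Finset.sum_congr rfl fun a ha => ?_
          congr 1
          rw [Finset.filter_filter]
          exact Finset.filter_congr fun h _ => by
            constructor
            · rintro ⟨_, hh⟩; exact hh
            · intro hh; exact ⟨by show h j ∈ M; rw [hh]; exact ha, hh⟩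
      _ = ∑ j : Fin B, (M.card : ℝ) *
            ∑ h ∈ univ.filter (fun h : Fin B → α => h j = a0), φ (imc h) := by
          refine Finset.sum_congr rfl fun j _ => ?_
          rw [Finset.sum_congr rfl (fun a _ => hfib j a), Finset.sum_const, nsmul_eq_mul]
      _ = (M.card : ℝ) * S := by
          have hBne : (B : ℝ) ≠ 0 := Nat.cast_ne_zero.2 (by omega)
          have hcj : ∀ j : Fin B,
              (∑ h ∈ univ.filter (fun h : Fin B → α => h j = a0), φ (imc h)) = S / B :=
            fun j => eq_div_of_mul_eq hBne (by rw [mul_comm]; exact htot j)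
          rw [Finset.sum_congr rfl (fun j _ => by rw [hcj j])]
          rw [Finset.sum_const, card_univ, Fintype.card_fin, nsmul_eq_mul]
          field_simp

private lemma card_marked {A C : ℕ} (hC : C ≤ A) :
    ((univ : Finset (Fin A)).filter (fun a => a.val < C)).card = C := by
  classical
  have : (univ : Finset (Fin A)).filter (fun a => a.val < C)
      = Finset.image (Fin.castLE hC) univ := by
    ext x
    simp only [mem_filter, mem_univ, true_and, mem_image]
    constructor
    · intro hx; exact ⟨⟨x.val, hx⟩, by ext; simp⟩
    · rintro ⟨y, rfl⟩; exact y.2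
  rw [this, Finset.card_image_of_injective _ (Fin.castLE_injective hC), card_univ,
    Fintype.card_fin]

private lemma filter_eq_inter {A C : ℕ} (t : Finset (Fin A)) :
    t.filter (fun a => a.val < C) = t ∩ (univ.filter (fun a => a.val < C)) := by
  ext x; simp [mem_filter, mem_inter]

private lemma count_hyper {A B C : ℕ} (hC : C ≤ A) (k : ℕ) (hk : k ≤ B) :
    (((univ : Finset (Fin A)).powersetCard B).filter
        (fun t => (t.filter (fun a => a.val < C)).card = k)).card
      = C.choose k * (A - C).choose (B - k) := by
  classical
  set M : Finset (Fin A) := (univ : Finset (Fin A)).filter (fun a => a.val < C) with hM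
  have hMc : M.card = C := card_marked hC
  have key : (((univ : Finset (Fin A)).powersetCard B).filter
        (fun t => (t.filter (fun a => a.val < C)).card = k)).card
      = ((M.powersetCard k) ×ˢ (Mᶜ.powersetCard (B - k))).card := by
    apply Finset.card_bij' (fun t _ => (t ∩ M, t \ M)) (fun p _ => p.1 ∪ p.2)
    · intro t ht
      rw [mem_filter, mem_powersetCard] at ht
      obtain ⟨⟨-, htc⟩, hkk⟩ := ht
      have h1 : t ∩ M = t.filter (fun a => a.val < C) := (filter_eq_inter t).symm
      rw [mem_product, mem_powersetCard, mem_powersetCard]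
      refine ⟨⟨inter_subset_right, by rw [h1, hkk]⟩, fun x hx => ?_, ?_⟩
      · rw [mem_compl]; exact fun hxM => (mem_sdiff.1 hx).2 hxM
      · show (t \ M).card = B - k
        have h2 := Finset.card_inter_add_card_sdiff t M
        have h3 : (t ∩ M).card = k := by rw [h1, hkk]
        omega
    · intro p hp
      rw [mem_product, mem_powersetCard, mem_powersetCard] at hp
      obtain ⟨⟨h1M, h1c⟩, h2M, h2c⟩ := hp
      have hdisj : Disjoint p.1 p.2 := by
        refine Finset.disjoint_left.2 fun x hx1 hx2 => ?_
        exact (mem_compl.1 (h2M hx2)) (h1M hx1)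
      rw [mem_filter, mem_powersetCard]
      refine ⟨⟨subset_univ _, ?_⟩, ?_⟩
      · rw [card_union_of_disjoint hdisj, h1c, h2c]; omega
      · rw [filter_eq_inter, ← hM, union_inter_distrib_right]
        have e1 : p.1 ∩ M = p.1 := inter_eq_left.2 h1M
        have e2 : p.2 ∩ M = ∅ := by
          refine eq_empty_of_forall_notMem fun x hx => ?_
          rw [mem_inter] at hx
          exact (mem_compl.1 (h2M hx.1)) hx.2
        rw [e1, e2, union_empty, h1c]
    · intro t ht
      show t ∩ M ∪ t \ M = t
      exact sup_inf_sdiff t M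
    · intro p hp
      rw [mem_product, mem_powersetCard, mem_powersetCard] at hp
      obtain ⟨⟨h1M, h1c⟩, h2M, h2c⟩ := hp
      show ((p.1 ∪ p.2) ∩ M, (p.1 ∪ p.2) \ M) = p
      have e1 : (p.1 ∪ p.2) ∩ M = p.1 := by
        rw [union_inter_distrib_right, inter_eq_left.2 h1M]
        have e2 : p.2 ∩ M = ∅ := by
          refine eq_empty_of_forall_notMem fun x hx => ?_
          rw [mem_inter] at hx
          exact (mem_compl.1 (h2M hx.1)) hx.2
        rw [e2, union_empty]
      have e3 : (p.1 ∪ p.2) \ M = p.2 := by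
        ext x
        simp only [mem_sdiff, mem_union]
        constructor
        · rintro ⟨hx1 | hx2, hxM⟩
          · exact absurd (h1M hx1) hxM
          · exact hx2
        · intro hx2; exact ⟨Or.inr hx2, mem_compl.1 (h2M hx2)⟩
      rw [e1, e3]
  rw [key, card_product, card_powersetCard, card_powersetCard, hMc, card_compl,
    Fintype.card_fin, hMc]

private lemma count_bin {A B C : ℕ} (hC : C ≤ A) (k : ℕ) :
    ((univ : Finset (Fin B → Fin A)).filter
        (fun h => ((univ : Finset (Fin B)).filter (fun i => (h i).val < C)).card = k)).card
      = B.choose k * (C ^ k * (A - C) ^ (B - k)) := by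
  classical
  set M : Finset (Fin A) := (univ : Finset (Fin A)).filter (fun a => a.val < C) with hM
  have hMc : M.card = C := card_marked hC
  have hMcc : Mᶜ.card = A - C := by rw [card_compl, Fintype.card_fin, hMc]
  rw [Finset.card_eq_sum_card_fiberwise
    (f := fun h : Fin B → Fin A => (univ : Finset (Fin B)).filter (fun i => (h i).val < C))
    (t := (univ : Finset (Fin B)).powersetCard k)
    (fun h hh => by
      rw [mem_coe, mem_powersetCard]
      exact ⟨subset_univ _, (mem_filter.1 (mem_coe.1 hh)).2⟩)]
  have hfix : ∀ S ∈ (univ : Finset (Fin B)).powersetCard k,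
      (((univ : Finset (Fin B → Fin A)).filter
          (fun h => ((univ : Finset (Fin B)).filter (fun i => (h i).val < C)).card = k)).filter
        (fun h => (univ : Finset (Fin B)).filter (fun i => (h i).val < C) = S)).card
      = C ^ k * (A - C) ^ (B - k) := by
    intro S hS
    rw [mem_powersetCard] at hS
    have hfil : (((univ : Finset (Fin B → Fin A)).filter
          (fun h => ((univ : Finset (Fin B)).filter (fun i => (h i).val < C)).card = k)).filter
        (fun h => (univ : Finset (Fin B)).filter (fun i => (h i).val < C) = S))
        = Fintype.piFinset (fun i : Fin B => if i ∈ S then M else Mᶜ) := by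
      ext h
      rw [mem_filter, mem_filter, Fintype.mem_piFinset]
      constructor
      · rintro ⟨⟨-, -⟩, hgS⟩ i
        by_cases hiS : i ∈ S
        · simp only [hiS, if_true, hM, mem_filter, mem_univ, true_and]
          have := hgS ▸ hiS
          exact (mem_filter.1 this).2
        · simp only [hiS, if_false, mem_compl, hM, mem_filter, mem_univ, true_and]
          intro hlt
          exact hiS (hgS ▸ (mem_filter.2 ⟨mem_univ _, hlt⟩))
      · intro hall
        have hgS : (univ : Finset (Fin B)).filter (fun i => (h i).val < C) = S := by
          ext i
          rw [mem_filter]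
          constructor
          · rintro ⟨-, hlt⟩
            by_contra hiS
            have := hall i
            rw [if_neg hiS, mem_compl, hM, mem_filter] at this
            exact this ⟨mem_univ _, hlt⟩
          · intro hiS
            have := hall i
            rw [if_pos hiS, hM, mem_filter] at this
            exact ⟨mem_univ _, this.2⟩
        exact ⟨⟨mem_univ _, by rw [hgS, hS.2]⟩, hgS⟩
    rw [hfil, Fintype.card_piFinset]
    have : ∀ i : Fin B, (if i ∈ S then M else Mᶜ).card = if i ∈ S then C else A - C := by
      intro i; split <;> simp [hMc, hMcc]
    rw [Finset.prod_congr rfl fun i _ => this i, Finset.prod_ite, Finset.prod_const,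
      Finset.prod_const]
    have h1 : ((univ : Finset (Fin B)).filter (fun i => i ∈ S)).card = k := by
      rw [Finset.filter_univ_mem, hS.2]
    have h2 : ((univ : Finset (Fin B)).filter (fun i => ¬ i ∈ S)).card = B - k := by
      have : (univ : Finset (Fin B)).filter (fun i => ¬ i ∈ S) = Sᶜ := by
        ext i; simp [mem_compl]
      rw [this, card_compl, Fintype.card_fin, hS.2]
    rw [h1, h2]
  rw [Finset.sum_congr rfl hfix, Finset.sum_const, card_powersetCard, card_univ,
    Fintype.card_fin, smul_eq_mul]

private noncomputable def wgt (A B n : ℕ) : ℝ := ((A - n).choose (B - n) : ℝ)⁻¹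

private lemma wgt_nonneg (A B n : ℕ) : 0 ≤ wgt A B n := by
  unfold wgt; positivity

private lemma count_supersets {A B : ℕ} (s : Finset (Fin A)) (hsB : s.card ≤ B) :
    (((univ : Finset (Fin A)).powersetCard B).filter (fun t => s ⊆ t)).card
      = (A - s.card).choose (B - s.card) := by
  classical
  have : (((univ : Finset (Fin A)).powersetCard B).filter (fun t => s ⊆ t)).card
      = (sᶜ.powersetCard (B - s.card)).card := by
    apply Finset.card_bij' (fun t _ => t \ s) (fun u _ => u ∪ s)
    · intro t ht
      rw [mem_filter, mem_powersetCard] at ht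
      obtain ⟨⟨-, htc⟩, hst⟩ := ht
      rw [mem_powersetCard]
      refine ⟨fun x hx => ?_, ?_⟩
      · rw [mem_compl]; exact (mem_sdiff.1 hx).2
      · rw [card_sdiff_of_subset hst, htc]
    · intro u hu
      rw [mem_powersetCard] at hu
      obtain ⟨hus, huc⟩ := hu
      have hdisj : Disjoint u s := fun v hvu hvs x hx =>
        absurd ((mem_compl.1 (hus (hvu hx)))) (by simp [hvs hx])
      rw [mem_filter, mem_powersetCard]
      refine ⟨⟨subset_univ _, ?_⟩, subset_union_right⟩
      rw [card_union_of_disjoint hdisj, huc]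
      omega
    · intro t ht
      rw [mem_filter] at ht
      exact sdiff_union_of_subset ht.2
    · intro u hu
      rw [mem_powersetCard] at hu
      apply union_sdiff_cancel_right
      intro v hvu hvs x hx
      exact absurd (mem_compl.1 (hu.1 (hvu hx))) (by simp [hvs hx])
  rw [this, card_powersetCard, card_compl, Fintype.card_fin]

private lemma bridge {A B : ℕ} (hBA : B ≤ A) (g : (Fin B → Fin A) → ℝ) :
    ∑ h : Fin B → Fin A, g h
      = ∑ t ∈ (univ : Finset (Fin A)).powersetCard B,
          ∑ h ∈ univ.filter (fun h : Fin B → Fin A => univ.image h ⊆ t),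
            wgt A B (imc h) * g h := by
  classical
  rw [Finset.sum_comm' (s' := fun h : Fin B → Fin A =>
      ((univ : Finset (Fin A)).powersetCard B).filter (fun t => univ.image h ⊆ t))
    (t' := (univ : Finset (Fin B → Fin A)))
    (by
      intro t h
      simp only [mem_filter, mem_univ, true_and, and_true])]
  refine (Finset.sum_congr rfl fun h _ => ?_).symm
  rw [Finset.sum_const, count_supersets _ (imc_le h), nsmul_eq_mul]
  simp only [wgt, imc]
  rw [← mul_assoc]
  have him := imc_le h
  simp only [imc] at him
  have hpos : 0 < (A - (univ.image h).card).choose (B - (univ.image h).card) :=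
    Nat.choose_pos (by omega)
  rw [mul_inv_cancel₀ (by exact_mod_cast hpos.ne'), one_mul]

private lemma reindex {A B : ℕ} (t : Finset (Fin A)) (F : (Fin B → Fin A) → ℝ) :
    ∑ h ∈ univ.filter (fun h : Fin B → Fin A => univ.image h ⊆ t), F h
      = ∑ h' : Fin B → {x // x ∈ t}, F (fun i => (h' i : Fin A)) := by
  classical
  apply Finset.sum_bij'
    (i := fun (h : Fin B → Fin A)
        (hh : h ∈ univ.filter (fun h : Fin B → Fin A => univ.image h ⊆ t)) =>
      fun i => (⟨h i, (mem_filter.1 hh).2 (mem_image_of_mem h (mem_univ i))⟩ : {x // x ∈ t}))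
    (j := fun (h' : Fin B → {x // x ∈ t}) _ => fun i => (h' i : Fin A))
  case hi => intro h hh; exact mem_univ _
  case hj =>
    intro h' _
    rw [mem_filter]
    refine ⟨mem_univ _, fun x hx => ?_⟩
    obtain ⟨i, -, rfl⟩ := mem_image.1 hx
    exact (h' i).2
  case left_neg => intro h hh; rfl
  case right_neg => intro h' _; funext i; exact Subtype.ext rfl
  case h => intro h hh; rfl

private noncomputable def G0 (A B : ℕ) : ℝ := ∑ u : Fin B → Fin B, wgt A B (imc u)

private lemma sum_wgt_subtype {A B : ℕ} {t : Finset (Fin A)} (htB : t.card = B) :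
    ∑ h' : Fin B → {x // x ∈ t}, wgt A B (imc h') = G0 A B :=
  sum_imc_equiv (Fintype.equivFinOfCardEq (by rw [Fintype.card_coe, htB])) (wgt A B)

private lemma imc_coe {A B : ℕ} {t : Finset (Fin A)} (h' : Fin B → {x // x ∈ t}) :
    imc (fun i => ((h' i : Fin A))) = imc h' := by
  have : (fun i => ((h' i : Fin A))) = (Subtype.val ∘ h') := rfl
  rw [this, imc_comp_inj _ Subtype.coe_injective]

private lemma G0_eq {A B : ℕ} (hBA : B ≤ A) :
    (A.choose B : ℝ) * G0 A B = (A : ℝ) ^ B := by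
  classical
  have hb := bridge hBA (fun _ => (1:ℝ))
  have hL : ∑ _h : Fin B → Fin A, (1:ℝ) = (A : ℝ) ^ B := by
    rw [Finset.sum_const, card_univ, Fintype.card_fun, Fintype.card_fin, Fintype.card_fin,
      nsmul_eq_mul, mul_one]
    push_cast
    rfl
  have hR : ∀ t ∈ (univ : Finset (Fin A)).powersetCard B,
      ∑ h ∈ univ.filter (fun h : Fin B → Fin A => univ.image h ⊆ t),
        wgt A B (imc h) * (1:ℝ) = G0 A B := by
    intro t ht
    rw [mem_powersetCard] at ht
    rw [reindex t (fun h => wgt A B (imc h) * 1)]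
    rw [Finset.sum_congr rfl (fun h' _ => by rw [imc_coe, mul_one])]
    exact sum_wgt_subtype ht.2
  rw [hL, Finset.sum_congr rfl hR, Finset.sum_const, card_powersetCard, card_univ,
    Fintype.card_fin, nsmul_eq_mul] at hb
  exact hb.symm

private lemma G0_pos {A B : ℕ} (hA : 1 ≤ A) (hBA : B ≤ A) : 0 < G0 A B := by
  have h := G0_eq hBA
  have hc : 0 < (A.choose B : ℝ) := by
    exact_mod_cast Nat.choose_pos hBA
  have hp : 0 < (A : ℝ) ^ B := by positivity
  nlinarith

private lemma card_marked_subtype {A C : ℕ} (t : Finset (Fin A)) :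
    ((univ : Finset {x // x ∈ t}).filter (fun a : {x // x ∈ t} => (a : Fin A).val < C)).card
      = (t.filter (fun a => a.val < C)).card := by
  classical
  rw [Finset.card_filter, Finset.card_filter, Finset.univ_eq_attach,
    ← Finset.sum_attach t (fun a => if a.val < C then 1 else 0)]

private lemma per_t {A B C : ℕ} (hA : 1 ≤ A) (hBA : B ≤ A)
    (f : ℝ → ℝ) (hf : ConvexOn ℝ Set.univ f)
    {t : Finset (Fin A)} (htB : t.card = B) :
    G0 A B * f (((t.filter (fun a => a.val < C)).card : ℕ))
      ≤ ∑ h' : Fin B → {x // x ∈ t},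
          wgt A B (imc h')
            * f ((((univ : Finset (Fin B)).filter
                (fun j => ((h' j : Fin A)).val < C)).card : ℕ)) := by
  classical
  have hG : ∑ h' : Fin B → {x // x ∈ t}, wgt A B (imc h') = G0 A B := sum_wgt_subtype htB
  have hGpos : 0 < G0 A B := G0_pos hA hBA
  set M : Finset {x // x ∈ t} :=
    (univ : Finset {x // x ∈ t}).filter (fun a => (a : Fin A).val < C) with hMdef
  have hMcard : (M.card : ℕ) = (t.filter (fun a => a.val < C)).card := card_marked_subtype t
  have hcnt_eq : ∀ h' : Fin B → {x // x ∈ t},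
      (univ : Finset (Fin B)).filter (fun j => ((h' j : Fin A)).val < C)
        = (univ : Finset (Fin B)).filter (fun j => h' j ∈ M) := by
    intro h'
    refine Finset.filter_congr fun j _ => ?_
    rw [hMdef, mem_filter]
    simp
  have hmean : ∑ h' : Fin B → {x // x ∈ t}, wgt A B (imc h')
        * ((((univ : Finset (Fin B)).filter (fun j => ((h' j : Fin A)).val < C)).card : ℕ) : ℝ)
      = ((t.filter (fun a => a.val < C)).card : ℝ) * G0 A B := by
    rw [Finset.sum_congr rfl (fun h' _ => by rw [hcnt_eq h'])]
    rw [mean_lemma (by rw [Fintype.card_coe, htB]) M (wgt A B), hG, hMcard]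
  -- Jensen
  have key := hf.map_sum_le (t := (univ : Finset (Fin B → {x // x ∈ t})))
    (w := fun h' => wgt A B (imc h') / G0 A B)
    (p := fun h' => ((((univ : Finset (Fin B)).filter
        (fun j => ((h' j : Fin A)).val < C)).card : ℕ) : ℝ))
    (fun h' _ => div_nonneg (wgt_nonneg _ _ _) hGpos.le)
    (by rw [← Finset.sum_div, hG, div_self hGpos.ne'])
    (fun h' _ => Set.mem_univ _)
  have hmeanpt : ∑ h' : Fin B → {x // x ∈ t},
      (wgt A B (imc h') / G0 A B) • ((((univ : Finset (Fin B)).filter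
        (fun j => ((h' j : Fin A)).val < C)).card : ℕ) : ℝ)
      = ((t.filter (fun a => a.val < C)).card : ℝ) := by
    simp only [smul_eq_mul, div_mul_eq_mul_div]
    rw [← Finset.sum_div, hmean, mul_div_assoc, div_self hGpos.ne', mul_one]
  rw [hmeanpt] at key
  have := mul_le_mul_of_nonneg_left key hGpos.le
  rw [Finset.mul_sum] at this
  calc G0 A B * f (((t.filter (fun a => a.val < C)).card : ℕ))
      ≤ ∑ h' : Fin B → {x // x ∈ t}, G0 A B * ((wgt A B (imc h') / G0 A B)
          • f ((((univ : Finset (Fin B)).filter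
            (fun j => ((h' j : Fin A)).val < C)).card : ℕ))) := this
    _ = _ := by
        refine Finset.sum_congr rfl fun h' _ => ?_
        rw [smul_eq_mul]
        field_simp

end Hoeffding

/-- Hoeffding's theorem: the hypergeometric distribution is dominated by the
corresponding binomial distribution in the convex order. -/
theorem hypergeom_le_binomial_convex
    (A B C : ℕ) (hA : 1 ≤ A) (hB : B ≤ A) (hC : C ≤ A)
    (f : ℝ → ℝ) (hf : ConvexOn ℝ Set.univ f) :
    ∑ k ∈ Finset.range (B + 1),
        ((C.choose k : ℝ) * ((A - C).choose (B - k)) / (A.choose B)) * f k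
      ≤ ∑ k ∈ Finset.range (B + 1),
        ((B.choose k : ℝ) * ((C : ℝ) / A) ^ k * (1 - (C : ℝ) / A) ^ (B - k)) * f k := by
  classical
  have hyper_eq :
      ∑ k ∈ Finset.range (B + 1),
          ((C.choose k : ℝ) * ((A - C).choose (B - k)) / (A.choose B)) * f k
        = ∑ t ∈ (univ : Finset (Fin A)).powersetCard B,
            (A.choose B : ℝ)⁻¹ * f (((t.filter (fun a => a.val < C)).card : ℕ)) := by
    rw [← Finset.sum_fiberwise_of_maps_to
      (g := fun t : Finset (Fin A) => (t.filter (fun a => a.val < C)).card)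
      (t := Finset.range (B+1))
      (fun t ht => by
        rw [mem_range, Nat.lt_succ_iff]
        calc (t.filter (fun a => a.val < C)).card ≤ t.card := card_filter_le _ _
        _ = B := (mem_powersetCard.1 ht).2)
      (fun t => (A.choose B : ℝ)⁻¹ * f (((t.filter (fun a => a.val < C)).card : ℕ)))]
    refine Finset.sum_congr rfl fun k hk => ?_
    rw [mem_range, Nat.lt_succ_iff] at hk
    rw [Finset.sum_congr rfl (fun t htf => by rw [(mem_filter.1 htf).2]),
      Finset.sum_const, nsmul_eq_mul, count_hyper hC k hk]
    push_cast
    ring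
  have bin_eq :
      ∑ k ∈ Finset.range (B + 1),
          ((B.choose k : ℝ) * ((C : ℝ) / A) ^ k * (1 - (C : ℝ) / A) ^ (B - k)) * f k
        = ∑ h : Fin B → Fin A,
            ((A : ℝ) ^ B)⁻¹
              * f ((((univ : Finset (Fin B)).filter (fun i => (h i).val < C)).card : ℕ)) := by
    rw [← Finset.sum_fiberwise_of_maps_to
      (g := fun h : Fin B → Fin A =>
        ((univ : Finset (Fin B)).filter (fun i => (h i).val < C)).card)
      (t := Finset.range (B+1))
      (fun h _ => by
        rw [mem_range, Nat.lt_succ_iff]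
        calc ((univ : Finset (Fin B)).filter (fun i => (h i).val < C)).card
            ≤ (univ : Finset (Fin B)).card := card_filter_le _ _
        _ = B := by simp)
      (fun h => ((A : ℝ) ^ B)⁻¹
          * f ((((univ : Finset (Fin B)).filter (fun i => (h i).val < C)).card : ℕ)))]
    refine Finset.sum_congr rfl fun k hk => ?_
    rw [mem_range, Nat.lt_succ_iff] at hk
    rw [Finset.sum_congr rfl (fun h hhf => by rw [(mem_filter.1 hhf).2]),
      Finset.sum_const, nsmul_eq_mul, count_bin hC k]
    have hA0 : (A:ℝ) ≠ 0 := by positivity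
    have h1 : (1 : ℝ) - (C:ℝ)/A = ((A - C : ℕ) : ℝ)/A := by
      rw [Nat.cast_sub hC]
      field_simp
    have hpow : (A:ℝ)^k * (A:ℝ)^(B-k) = (A:ℝ)^B := by
      rw [← pow_add]; congr 1; omega
    rw [h1, div_pow, div_pow]
    push_cast
    rw [← hpow]
    field_simp
  rw [hyper_eq, bin_eq]
  have hABne : ((A:ℝ)^B) ≠ 0 := by positivity
  have hchoose_pos : (0:ℝ) < (A.choose B : ℝ) := by exact_mod_cast Nat.choose_pos hB
  have hkey : (A.choose B : ℝ)⁻¹ = ((A:ℝ)^B)⁻¹ * G0 A B := by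
    have h := G0_eq hB
    field_simp
    linarith [h]
  rw [bridge hB (fun h => ((A : ℝ)^B)⁻¹
      * f ((((univ : Finset (Fin B)).filter (fun i => (h i).val < C)).card : ℕ)))]
  refine Finset.sum_le_sum fun t ht => ?_
  have htB := (mem_powersetCard.1 ht).2
  rw [reindex t (fun h => wgt A B (imc h) * (((A : ℝ)^B)⁻¹
      * f ((((univ : Finset (Fin B)).filter (fun i => (h i).val < C)).card : ℕ))))]
  have hterm : ∀ h' : Fin B → {x // x ∈ t},
      wgt A B (imc (fun i => ((h' i : Fin A)))) * (((A : ℝ)^B)⁻¹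
        * f ((((univ : Finset (Fin B)).filter
            (fun i => (((fun i => ((h' i : Fin A))) i)).val < C)).card : ℕ)))
      = ((A : ℝ)^B)⁻¹ * (wgt A B (imc h')
        * f ((((univ : Finset (Fin B)).filter
            (fun j => ((h' j : Fin A)).val < C)).card : ℕ))) := by
    intro h'
    rw [imc_coe]
    ring
  rw [Finset.sum_congr rfl (fun h' _ => hterm h'), ← Finset.mul_sum, hkey, mul_assoc]
  exact mul_le_mul_of_nonneg_left (per_t hA hB f hf htB) (by positivity)
end
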